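/- Let V be an n-dimensional vector space, A an endomorphism with cyclic vector e, W a vector space, and H : V × V → W a bilinear alternating map such that H(u, Av) + H(v, Au) = 0 for all u, v ∈ V. Then H = 0. -/

import Mathlib

/-- Vector-valued version: if `e` is cyclic for `A` and `H` is a skew-symmetric bilinear
`W`-valued map with `H u (A v) + H v (A u) = 0`, then `H = 0` (char `K` ≠ 2). -/
theorem stmt4 {K V W : Type*} [Field K] [AddCommGroup V] [Module K V]
    [AddCommGroup W] [Module K W] {n : ℕ}
    (hchar : (2 : K) ≠ 0)
    (A : Module.End K V) (e : V)
    (bas : Module.Basis (Fin n) K V) (hbas : ∀ i : Fin n, bas i = (A ^ (i : ℕ)) e)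
    (H : V →ₗ[K] V →ₗ[K] W)
    (hskew : ∀ u v, H u v = - H v u)
    (hA : ∀ u v, H u (A v) + H v (A u) = 0) :
    H = 0 := by
  have e1 : ∀ j : ℕ, (A ^ (j + 1)) e = A ((A ^ j) e) := by
    intro j
    rw [pow_succ']
    rfl
  have shift : ∀ i j : ℕ,
      H ((A ^ (i + 1)) e) ((A ^ j) e) = H ((A ^ i) e) ((A ^ (j + 1)) e) := by
    intro i j
    have h1 := hA ((A ^ i) e) ((A ^ j) e)
    have h2 := hskew ((A ^ j) e) ((A ^ (i + 1)) e)
    rw [e1 i, e1 j]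
    rw [e1 i] at h2
    rw [h2, ← sub_eq_add_neg] at h1
    exact (sub_eq_zero.mp h1).symm
  have key : ∀ i j : ℕ, H ((A ^ i) e) ((A ^ j) e) = H e ((A ^ (i + j)) e) := by
    intro i
    induction i with
    | zero => intro j; simp
    | succ i ih =>
      intro j
      rw [shift i j, ih (j + 1), show i + (j + 1) = i + 1 + j from by omega]
  have zero : ∀ i j : ℕ, H ((A ^ i) e) ((A ^ j) e) = 0 := by
    intro i j
    have h1 := key i j
    have h2 := key j i
    have h3 := hskew ((A ^ i) e) ((A ^ j) e)
    rw [h1, h2, Nat.add_comm j i] at h3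
    have h4 : (2 : K) • H e ((A ^ (i + j)) e) = 0 := by
      rw [two_smul]
      nth_rewrite 1 [h3]
      abel
    rcases smul_eq_zero.mp h4 with h | h
    · exact absurd h hchar
    · rw [h1, h]
  apply bas.ext
  intro i
  apply bas.ext
  intro j
  rw [hbas i, hbas j]
  simp [zero]
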